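/- Let C be an isomorphism-closed class of uniform spaces that is closed under products and closed under closed subspaces, and suppose C is algebraic, i.e. the full subcategory C of uniform spaces has coequalizers, its underlying-set functor U : C → Set has a left adjoint, and U preserves and reflects regular epimorphisms. Then either C is the class of all indiscrete uniform spaces, or every member of C is separated. -/

import Mathlib

universe u

open Uniformity CategoryTheory CategoryTheory.Limits

/-- A class of uniform spaces (in a fixed universe `u`). -/
abbrev UnifClass := ∀ X : Type u, UniformSpace X → Prop

/-- `C` is closed under uniform isomorphisms. -/
def UnifClass.IsoClosed (C : UnifClass.{u}) : Prop :=
  ∀ (X Y : Type u) (uX : UniformSpace X) (uY : UniformSpace Y),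
    C X uX → Nonempty (@UniformEquiv X Y uX uY) → C Y uY

/-- `C` is closed under arbitrary products (with the product uniformity). -/
def UnifClass.ClosedUnderProducts (C : UnifClass.{u}) : Prop :=
  ∀ (ι : Type u) (X : ι → Type u) (t : ∀ i, UniformSpace (X i)),
    (∀ i, C (X i) (t i)) → C (∀ i, X i) (@Pi.uniformSpace ι X t)

/-- `C` is closed under closed subspaces (uniform embeddings with closed range). -/
def UnifClass.ClosedUnderClosedSubspaces (C : UnifClass.{u}) : Prop :=
  ∀ (X Y : Type u) (uX : UniformSpace X) (uY : UniformSpace Y),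
    C X uX →
    (∃ f : Y → X, @IsUniformEmbedding Y X uY uX f ∧
      @IsClosed X uX.toTopologicalSpace (Set.range f)) → C Y uY

/-- A uniform space is indiscrete if its only entourage is the whole square. -/
def IsIndiscreteUnif (X : Type u) (uX : UniformSpace X) : Prop :=
  ∀ V ∈ @uniformity X uX, V = Set.univ

/-- A uniform space is separated if the intersection of all entourages is the diagonal. -/
def IsSeparatedUnif (X : Type u) (uX : UniformSpace X) : Prop :=
  ∀ x y : X, (∀ V ∈ @uniformity X uX, (x, y) ∈ V) → x = y

/-- The full subcategory of `UniformSpaceCat` determined by a class of uniform spaces. -/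
abbrev UnifClass.Cat (C : UnifClass.{u}) : Type (u + 1) :=
  ObjectProperty.FullSubcategory (fun X : UniformSpaceCat.{u} => C X X.str)

/-- The underlying-set functor of the full subcategory determined by `C`. -/
noncomputable def UnifClass.U (C : UnifClass.{u}) : C.Cat ⥤ Type u :=
  ObjectProperty.ι _ ⋙ forget UniformSpaceCat

/-- A concrete category (over `Type u`) is algebraic if it has coequalizers, its
underlying-set functor has a left adjoint and preserves and reflects regular
epimorphisms. -/
def AlgebraicConcreteCategory {D : Type (u + 1)} [Category.{u} D] (U : D ⥤ Type u) : Prop :=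
  HasCoequalizers D ∧ U.IsRightAdjoint ∧
    (∀ (A B : D) (f : A ⟶ B), Nonempty (RegularEpi f) → Nonempty (RegularEpi (U.map f))) ∧
    (∀ (A B : D) (f : A ⟶ B), Nonempty (RegularEpi (U.map f)) → Nonempty (RegularEpi f))


open Filter Set Topology

lemma indiscrete_uniformity_eq_top {X : Type u} {uX : UniformSpace X}
    (h : IsIndiscreteUnif X uX) : @uniformity X uX = ⊤ := by
  apply le_antisymm le_top
  intro s hs
  rw [Filter.mem_top]
  exact h s hs

lemma isIndiscrete_of_uniformity_top {X : Type u} {uX : UniformSpace X}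
    (h : @uniformity X uX = ⊤) : IsIndiscreteUnif X uX := by
  intro V hV
  rw [h, Filter.mem_top] at hV
  exact hV

lemma uniformContinuous_into_indiscrete {A B : Type u} {uA : UniformSpace A}
    {uB : UniformSpace B} (h : IsIndiscreteUnif B uB) (f : A → B) :
    @UniformContinuous A B uA uB f := by
  rw [UniformContinuous, indiscrete_uniformity_eq_top h]
  exact le_top

lemma pi_indiscrete (ι : Type u) (X : ι → Type u) (t : ∀ i, UniformSpace (X i))
    (h : ∀ i, IsIndiscreteUnif (X i) (t i)) :
    IsIndiscreteUnif (∀ i, X i) (Pi.uniformSpace X) := by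
  apply isIndiscrete_of_uniformity_top
  rw [Pi.uniformSpace_eq, iInf_uniformity]
  simp only [uniformity_comap]
  simp [indiscrete_uniformity_eq_top (h _)]

lemma indiscrete_of_uc_surj {A B : Type u} {uA : UniformSpace A} {uB : UniformSpace B}
    (hA : IsIndiscreteUnif A uA) {f : A → B} (hf : @UniformContinuous A B uA uB f)
    (hs : Function.Surjective f) : IsIndiscreteUnif B uB := by
  intro V hV
  have h2 : (fun p : A × A => (f p.1, f p.2)) ⁻¹' V ∈ @uniformity A uA :=
    Filter.mem_map.mp (hf hV)
  have h3 := hA _ h2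
  apply Set.eq_univ_of_forall
  rintro ⟨b1, b2⟩
  obtain ⟨a1, rfl⟩ := hs b1
  obtain ⟨a2, rfl⟩ := hs b2
  have : (a1, a2) ∈ (fun p : A × A => (f p.1, f p.2)) ⁻¹' V := by
    rw [h3]; trivial
  exact this

noncomputable def uniformEquivOfIndiscrete {A B : Type u} (uA : UniformSpace A)
    (uB : UniformSpace B) (hA : IsIndiscreteUnif A uA) (hB : IsIndiscreteUnif B uB)
    (e : A ≃ B) : @UniformEquiv A B uA uB :=
  { toEquiv := e
    uniformContinuous_toFun := uniformContinuous_into_indiscrete hB e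
    uniformContinuous_invFun := uniformContinuous_into_indiscrete hA e.symm }

/-- Key lemma: if `C` contains an indiscrete space with two distinct points,
then `C` contains every indiscrete space. -/
lemma all_indiscrete_mem (C : UnifClass.{u}) (hiso : C.IsoClosed)
    (hprod : C.ClosedUnderProducts) (hclsub : C.ClosedUnderClosedSubspaces)
    (halg : AlgebraicConcreteCategory C.U)
    (K : Type u) (uK : UniformSpace K) (hK : C K uK) (hKind : IsIndiscreteUnif K uK)
    (k0 k1 : K) (hk : k0 ≠ k1) :
    ∀ (S : Type u) (uS : UniformSpace S), IsIndiscreteUnif S uS → C S uS := by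
  intro S uS hSind
  by_cases hE : IsEmpty S
  · -- empty case: closed subspace of K
    refine hclsub K S uK uS hK ⟨fun s => isEmptyElim s, ?_, ?_⟩
    · constructor
      · constructor
        have : ∀ (F G : Filter (S × S)), F = G := by
          intro F G
          ext s
          have hs : s = Set.univ := Set.eq_univ_of_forall (fun x => isEmptyElim x.1)
          subst hs; simp
        exact this _ _
      · intro a; exact isEmptyElim a
    · have : Set.range (fun s : S => (isEmptyElim s : K)) = ∅ := Set.range_eq_empty _
      rw [this]; exact isClosed_empty
  · haveI : Nonempty S := not_isEmpty_iff.mp hE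
    classical
    -- the big power M = S → K
    letI uM : UniformSpace (S → K) := Pi.uniformSpace _
    have hM : C (S → K) uM := hprod S (fun _ => K) (fun _ => uK) (fun _ => hK)
    have hMind : IsIndiscreteUnif (S → K) uM :=
      pi_indiscrete S (fun _ => K) (fun _ => uK) (fun _ => hKind)
    -- injection j : S → M and retraction g
    set j : S → (S → K) := fun s t => if t = s then k1 else k0 with hjdef
    have hj : Function.Injective j := by
      intro s s' h
      have := congrFun h s
      simp only [hjdef, if_pos rfl] at this
      by_contra hne
      rw [if_neg hne] at this
      exact hk this.symm
    set g : (S → K) → S := Function.invFun j with hgdef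
    have hgj : ∀ s, g (j s) = s := fun s => Function.leftInverse_invFun hj s
    -- W = Bool-indexed power of M
    letI uW : UniformSpace (ULift.{u} Bool → (S → K)) := Pi.uniformSpace _
    have hW : C (ULift.{u} Bool → (S → K)) uW :=
      hprod _ (fun _ => (S → K)) (fun _ => uM) (fun _ => hM)
    set a : (ULift.{u} Bool → (S → K)) → (S → K) := fun f => f (ULift.up false) with hadef
    set b : (ULift.{u} Bool → (S → K)) → (S → K) := fun f =>
      if g (f (ULift.up false)) = g (f (ULift.up true)) then f (ULift.up true)
      else f (ULift.up false) with hbdef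
    have hab : ∀ f, g (a f) = g (b f) := by
      intro f
      by_cases h : g (f (ULift.up false)) = g (f (ULift.up true))
      · simp [hadef, hbdef, if_pos h, h]
      · simp [hadef, hbdef, if_neg h]
    have hRab : ∀ m m' : S → K, g m = g m' →
        ∃ f : ULift.{u} Bool → (S → K), a f = m ∧ b f = m' := by
      intro m m' h
      refine ⟨fun i => cond i.down m' m, rfl, ?_⟩
      simp only [hbdef]
      have hc : g (cond (ULift.up.{u} false).down m' m) = g (cond (ULift.up.{u} true).down m' m) := h
      rw [if_pos hc]
      rfl
    -- category-theoretic part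
    let Mo : C.Cat := ⟨{ carrier := S → K, str := uM }, hM⟩
    let Wo : C.Cat := ⟨{ carrier := ULift.{u} Bool → (S → K), str := uW }, hW⟩
    let aC : Wo ⟶ Mo := ⟨a, uniformContinuous_into_indiscrete hMind a⟩
    let bC : Wo ⟶ Mo := ⟨b, uniformContinuous_into_indiscrete hMind b⟩
    haveI hco : HasCoequalizers C.Cat := halg.1
    let Q := coequalizer aC bC
    let q : Mo ⟶ Q := coequalizer.π aC bC
    have hre : Nonempty (RegularEpi (C.U.map q)) := halg.2.2.1 _ _ q ⟨coequalizerRegular aC bC⟩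
    have hqsurj : Function.Surjective (C.U.map q) := by
      obtain ⟨i⟩ := hre
      haveI := i
      exact (epi_iff_surjective (C.U.map q)).mp (RegularEpi.epi _ i)
    have hcond : ∀ w, C.U.map q (a w) = C.U.map q (b w) := by
      intro w
      have h2 := congrArg C.U.map (coequalizer.condition aC bC)
      rw [Functor.map_comp, Functor.map_comp] at h2
      exact ConcreteCategory.congr_hom h2 w
    let hmor : Mo ⟶ Mo := ⟨j ∘ g, uniformContinuous_into_indiscrete hMind _⟩
    have hcoeq : aC ≫ hmor = bC ≫ hmor := by
      apply ObjectProperty.hom_ext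
      apply UniformSpaceCat.hom_ext
      funext w
      show j (g (a w)) = j (g (b w))
      rw [hab]
    let hbar : Q ⟶ Mo := coequalizer.desc hmor hcoeq
    have hfac : q ≫ hbar = hmor := coequalizer.π_desc _ _
    have hfac' : ∀ m, C.U.map hbar (C.U.map q m) = j (g m) := by
      intro m
      have h3 := congrArg C.U.map hfac
      rw [Functor.map_comp] at h3
      exact ConcreteCategory.congr_hom h3 m
    let φ : S → C.U.obj Q := fun s => C.U.map q (j s)
    have hφinj : Function.Injective φ := by
      intro s s' h
      have h2 := congrArg (C.U.map hbar) h
      rw [hfac' (j s), hfac' (j s')] at h2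
      rw [hgj, hgj] at h2
      exact hj h2
    have hφsurj : Function.Surjective φ := by
      intro y
      obtain ⟨m, rfl⟩ := hqsurj y
      refine ⟨g m, ?_⟩
      obtain ⟨f, hfa, hfb⟩ := hRab m (j (g m)) (hgj (g m)).symm
      have h4 := hcond f
      rw [hfa, hfb] at h4
      exact h4.symm
    have hquc : @UniformContinuous _ _ uM Q.obj.str (C.U.map q) := q.hom.hom'.2
    have hQind : IsIndiscreteUnif (Q.obj : Type u) Q.obj.str :=
      indiscrete_of_uc_surj hMind hquc hqsurj
    have e : S ≃ (Q.obj : Type u) := Equiv.ofBijective φ ⟨hφinj, hφsurj⟩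
    exact hiso (Q.obj : Type u) S Q.obj.str uS Q.property
      ⟨uniformEquivOfIndiscrete _ _ hQind hSind e.symm⟩

theorem algebraic_epireflective_Unif_indiscrete_or_separated
    (C : UnifClass.{u}) (hiso : C.IsoClosed)
    (hprod : C.ClosedUnderProducts) (hclsub : C.ClosedUnderClosedSubspaces)
    (halg : AlgebraicConcreteCategory C.U) :
    (∀ (X : Type u) (uX : UniformSpace X), C X uX ↔ IsIndiscreteUnif X uX) ∨
    (∀ (X : Type u) (uX : UniformSpace X), C X uX → IsSeparatedUnif X uX) := by
  by_cases hsep : ∀ (X : Type u) (uX : UniformSpace X), C X uX → IsSeparatedUnif X uX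
  · exact Or.inr hsep
  · left
    push_neg at hsep
    obtain ⟨X₀, u₀, hX₀, hns⟩ := hsep
    letI := u₀
    rw [IsSeparatedUnif] at hns
    push_neg at hns
    obtain ⟨x, y, hxy, hne⟩ := hns
    -- every point of the closure of {x} is uniformly close to x
    have hclmem : ∀ z ∈ closure ({x} : Set X₀), ∀ V ∈ 𝓤 X₀, (z, x) ∈ V := by
      intro z hz V hV
      have hb : UniformSpace.ball z V ∈ 𝓝 z := UniformSpace.ball_mem_nhds z hV
      rcases mem_closure_iff_nhds.mp hz _ hb with ⟨t, ht1, ht2⟩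
      rcases ht2 with rfl
      exact ht1
    have hyK : y ∈ closure ({x} : Set X₀) := by
      rw [mem_closure_iff_nhds]
      intro t ht
      rcases UniformSpace.mem_nhds_iff.mp ht with ⟨V, hV, hball⟩
      refine ⟨x, hball ?_, rfl⟩
      have hswap : Prod.swap ⁻¹' V ∈ 𝓤 X₀ := tendsto_swap_uniformity hV
      exact hxy _ hswap
    have hxK : x ∈ closure ({x} : Set X₀) := subset_closure rfl
    -- the closure is an indiscrete closed subspace
    have hKC : C (↥(closure ({x} : Set X₀))) instUniformSpaceSubtype :=
      hclsub X₀ _ u₀ _ hX₀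
        ⟨Subtype.val, isUniformEmbedding_subtype_val, by
          rw [Subtype.range_val]; exact isClosed_closure⟩
    have hKpair : ∀ z w : ↥(closure ({x} : Set X₀)), ∀ V ∈ 𝓤 X₀,
        ((z : X₀), (w : X₀)) ∈ V := by
      intro z w V hV
      obtain ⟨W, hWmem, hWsymm, hWcomp⟩ := comp_symm_mem_uniformity_sets hV
      have h1 := hclmem z z.2 W hWmem
      have h2 := hclmem w w.2 W hWmem
      exact hWcomp (SetRel.prodMk_mem_comp h1 (SetRel.symm (R := W) h2))
    have hKind : IsIndiscreteUnif (↥(closure ({x} : Set X₀))) instUniformSpaceSubtype := by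
      intro V hV
      rw [uniformity_subtype] at hV
      obtain ⟨W, hW, hsub⟩ := hV
      apply Set.eq_univ_of_forall
      rintro ⟨z, w⟩
      exact hsub (hKpair z w W hW)
    have hk : (⟨x, hxK⟩ : ↥(closure ({x} : Set X₀))) ≠ ⟨y, hyK⟩ := by
      intro h
      exact hne (congrArg Subtype.val h)
    have hall := all_indiscrete_mem C hiso hprod hclsub halg _ _ hKC hKind _ _ hk
    intro X uX
    constructor
    · intro hX
      by_cases hEX : IsEmpty X
      · intro V _
        exact Set.eq_univ_of_forall (fun p => isEmptyElim p.1)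
      · haveI : Nonempty X := not_isEmpty_iff.mp hEX
        have hindTop : IsIndiscreteUnif X ⊤ := isIndiscrete_of_uniformity_top top_uniformity
        have hX' : C X ⊤ := hall X ⊤ hindTop
        let Xo : C.Cat := ⟨{ carrier := X, str := uX }, hX⟩
        let Xo' : C.Cat := ⟨{ carrier := X, str := ⊤ }, hX'⟩
        let eC : Xo ⟶ Xo' := ⟨id, uniformContinuous_into_indiscrete hindTop id⟩
        haveI : IsIso (C.U.map eC) := (isIso_iff_bijective _).mpr Function.bijective_id
        have hre2 : Nonempty (RegularEpi eC) := halg.2.2.2 _ _ eC ⟨RegularEpi.ofIso (asIso (C.U.map eC))⟩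
        obtain ⟨i2⟩ := hre2
        haveI := i2
        haveI : C.U.Faithful :=
          inferInstanceAs ((ObjectProperty.ι _ ⋙ forget UniformSpaceCat).Faithful)
        haveI : Mono eC := C.U.mono_of_mono_map inferInstance
        haveI : IsIso eC := isIso_of_regularEpi_of_mono eC i2
        have hr : eC ≫ inv eC = 𝟙 Xo := IsIso.hom_inv_id eC
        have hrval : ((inv eC).hom.hom'.val : X → X) = id := by
          have h7 := congrArg (fun f => f.hom.hom'.val) hr
          funext z
          exact congrFun h7 z
        intro V hV
        have huc : @UniformContinuous X X ⊤ uX (inv eC).hom.hom'.val := (inv eC).hom.hom'.2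
        have h5 : (fun p : X × X => ((inv eC).hom.hom'.val p.1, (inv eC).hom.hom'.val p.2)) ⁻¹' V ∈
            @uniformity X ⊤ := Filter.mem_map.mp (huc hV)
        have h6 := hindTop _ h5
        rw [hrval] at h6
        rw [show (fun p : X × X => (id p.1, id p.2)) ⁻¹' V = V from rfl] at h6
        exact h6
    · exact hall X uX
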